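/- Let Γ be a finite connected cubic G-vertex-transitive graph and suppose that for a vertex v the permutation group G_v^{Γ(v)} induced by the vertex stabilizer G_v on the neighbourhood Γ(v) has order 2. Then: (i) every vertex u of Γ has a unique neighbour u' with G_u = G_{u'}; (ii) the set T of all such edges {u,u'} is a perfect matching of Γ and is a single orbit of G on the edges of Γ (and G has exactly two orbits on edges); and (iii) the graph obtained from Γ by deleting the edges of T is a disjoint union of cycles, all of the same length. -/

import Mathlib

/- STATEMENT 7:
Let Γ be a finite connected cubic G-vertex-transitive graph such that the permutation
group G_v^{Γ(v)} induced by G_v on Γ(v) has order 2 for a vertex v. Then: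
(i) every vertex u has a unique neighbour u' with G_u = G_{u'};
(ii) the set T of all such edges is a perfect matching, is a single G-orbit on edges,
and G has exactly two orbits on edges;
(iii) Γ − T is a disjoint union of cycles, all of the same length. -/

namespace Stmt7

/-- The permutation group induced by the stabiliser `G_v` on the neighbourhood `Γ(v)`,
encoded as the set of restrictions to `Γ(v)` of elements of `G` fixing `v`. -/
def inducedNbhd {V : Type} (Γ : SimpleGraph V) (G : Subgroup (Equiv.Perm V)) (v : V) :
    Set (Γ.neighborSet v → V) :=
  {f | ∃ g ∈ G, (g : Equiv.Perm V) v = v ∧ ∀ u : Γ.neighborSet v, f u = g u.1}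

/-- The set of edges `{u,u'}` of `Γ` whose endpoints have the same stabiliser in `G`. -/
def matchingEdges {V : Type} (Γ : SimpleGraph V) (G : Subgroup (Equiv.Perm V)) :
    Set (Sym2 V) :=
  {e | ∃ u u' : V, e = s(u, u') ∧ Γ.Adj u u' ∧
    ∀ g ∈ G, ((g : Equiv.Perm V) u = u ↔ (g : Equiv.Perm V) u' = u')}


set_option linter.unusedSectionVars false

theorem _root_.Equiv.Perm.inv_apply_self {α : Type*} (f : Equiv.Perm α) (x : α) : f⁻¹ (f x) = x :=
  Equiv.symm_apply_apply f x

theorem _root_.Equiv.Perm.apply_inv_self {α : Type*} (f : Equiv.Perm α) (x : α) : f (f⁻¹ x) = x :=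
  Equiv.apply_symm_apply f x

variable {V : Type} [Fintype V] {Γ : SimpleGraph V} {G : Subgroup (Equiv.Perm V)}

/-- structural data at a vertex -/
def Struct (Γ : SimpleGraph V) (G : Subgroup (Equiv.Perm V)) (u u' a b : V) : Prop :=
  Γ.neighborSet u = {u', a, b} ∧ u' ≠ a ∧ u' ≠ b ∧ a ≠ b ∧
  (∀ g ∈ G, g u = u → g u' = u') ∧ (∃ g ∈ G, g u = u ∧ g a = b)

lemma three_cycle_false {v x y z : V} (hxy : x ≠ y) (hxz : x ≠ z) (hyz : y ≠ z)
    (hx : x ∈ Γ.neighborSet v)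
    {g : Equiv.Perm V} (hg : g ∈ G) (hgv : g v = v)
    (hgx : g x = y) (hgy : g y = z)
    (hloc : (inducedNbhd Γ G v).ncard = 2) : False := by
  have f0mem : (fun u : Γ.neighborSet v => (u : V)) ∈ inducedNbhd Γ G v :=
    ⟨1, G.one_mem, rfl, fun u => rfl⟩
  have f1mem : (fun u : Γ.neighborSet v => g (u : V)) ∈ inducedNbhd Γ G v :=
    ⟨g, hg, hgv, fun u => rfl⟩
  have f2mem : (fun u : Γ.neighborSet v => g (g (u : V))) ∈ inducedNbhd Γ G v :=
    ⟨g * g, G.mul_mem hg hg, by simp [Equiv.Perm.mul_apply, hgv], fun u => by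
      simp [Equiv.Perm.mul_apply]⟩
  have hsub : ({(fun u : Γ.neighborSet v => (u : V)),
      (fun u : Γ.neighborSet v => g (u : V)),
      (fun u : Γ.neighborSet v => g (g (u : V)))} : Set (Γ.neighborSet v → V))
      ⊆ inducedNbhd Γ G v := by
    intro f hf
    rcases hf with rfl | rfl | rfl
    exacts [f0mem, f1mem, f2mem]
  have hcard3 : ({(fun u : Γ.neighborSet v => (u : V)),
      (fun u : Γ.neighborSet v => g (u : V)),
      (fun u : Γ.neighborSet v => g (g (u : V)))} : Set (Γ.neighborSet v → V)).ncard = 3 := by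
    apply Set.ncard_eq_three.mpr
    refine ⟨_, _, _, ?_, ?_, ?_, rfl⟩
    · intro h
      have hc : x = g x := congrFun h ⟨x, hx⟩
      rw [hgx] at hc
      exact hxy hc
    · intro h
      have hc : x = g (g x) := congrFun h ⟨x, hx⟩
      rw [hgx, hgy] at hc
      exact hxz hc
    · intro h
      have hc : g x = g (g x) := congrFun h ⟨x, hx⟩
      rw [hgx, hgy] at hc
      exact hyz hc
  have := Set.ncard_le_ncard hsub (Set.toFinite _)
  rw [hcard3, hloc] at this
  omega

lemma fixed_all {v x y : V}
    (hx : x ∈ Γ.neighborSet v) (hy : y ∈ Γ.neighborSet v)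
    {g : Equiv.Perm V} (hg : g ∈ G) (hgv : g v = v) (hgx : g x = x) (hgy : g y ≠ y)
    (hloc : (inducedNbhd Γ G v).ncard = 2) :
    ∀ h ∈ G, h v = v → h x = x := by
  have f0mem : (fun u : Γ.neighborSet v => (u : V)) ∈ inducedNbhd Γ G v :=
    ⟨1, G.one_mem, rfl, fun u => rfl⟩
  have f1mem : (fun u : Γ.neighborSet v => g (u : V)) ∈ inducedNbhd Γ G v :=
    ⟨g, hg, hgv, fun u => rfl⟩
  have hne : (fun u : Γ.neighborSet v => (u : V)) ≠ (fun u : Γ.neighborSet v => g (u : V)) := by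
    intro h
    have hc : y = g y := congrFun h ⟨y, hy⟩
    exact hgy hc.symm
  have hpair : ({(fun u : Γ.neighborSet v => (u : V)),
      (fun u : Γ.neighborSet v => g (u : V))} : Set (Γ.neighborSet v → V))
      = inducedNbhd Γ G v := by
    apply Set.eq_of_subset_of_ncard_le
    · rintro f (rfl | rfl); exacts [f0mem, f1mem]
    · rw [hloc, Set.ncard_pair hne]
    · exact Set.toFinite _
  intro h hhG hhv
  have fhmem : (fun u : Γ.neighborSet v => h (u : V)) ∈ inducedNbhd Γ G v :=
    ⟨h, hhG, hhv, fun u => rfl⟩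
  rw [← hpair, Set.mem_insert_iff, Set.mem_singleton_iff] at fhmem
  rcases fhmem with heq | heq
  · exact (congrFun heq ⟨x, hx⟩ : h x = x)
  · have hc : h x = g x := congrFun heq ⟨x, hx⟩
    rw [hc, hgx]

lemma struct_v {v : V} (hcubic : (Γ.neighborSet v).ncard = 3)
    (hAut : ∀ g ∈ G, ∀ u w : V, Γ.Adj (g u) (g w) ↔ Γ.Adj u w)
    (hloc : (inducedNbhd Γ G v).ncard = 2) :
    ∃ u' a b : V, Struct Γ G v u' a b := by
  obtain ⟨x, y, z, hxy, hxz, hyz, hN⟩ := Set.ncard_eq_three.mp hcubic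
  obtain ⟨f1, f2, hf12, hS⟩ := Set.ncard_eq_two.mp hloc
  have hinclmem : (fun u : Γ.neighborSet v => (u : V)) ∈ inducedNbhd Γ G v :=
    ⟨1, G.one_mem, rfl, fun u => rfl⟩
  have hex : ∃ f ∈ inducedNbhd Γ G v, f ≠ (fun u : Γ.neighborSet v => (u : V)) := by
    by_cases h1 : f1 = (fun u : Γ.neighborSet v => (u : V))
    · exact ⟨f2, by rw [hS]; simp, by rw [← h1]; exact fun h => hf12 h.symm⟩
    · exact ⟨f1, by rw [hS]; simp, h1⟩
  obtain ⟨f, hfmem, hfne⟩ := hex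
  obtain ⟨g, hg, hgv, hf⟩ := hfmem
  have hmove : ∃ u : Γ.neighborSet v, g (u : V) ≠ (u : V) := by
    by_contra hcon
    push_neg at hcon
    exact hfne (funext fun u => (hf u).trans (hcon u))
  have hmap : ∀ w : V, w ∈ Γ.neighborSet v → g w ∈ Γ.neighborSet v := by
    intro w hw
    have : Γ.Adj (g v) (g w) := (hAut g hg v w).mpr hw
    rwa [hgv] at this
  have hx : x ∈ Γ.neighborSet v := by rw [hN]; simp
  have hy : y ∈ Γ.neighborSet v := by rw [hN]; simp
  have hz : z ∈ Γ.neighborSet v := by rw [hN]; simp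
  have hgx3 : g x = x ∨ g x = y ∨ g x = z := by
    have := hmap x hx; rw [hN] at this; simpa using this
  have hgy3 : g y = x ∨ g y = y ∨ g y = z := by
    have := hmap y hy; rw [hN] at this; simpa using this
  have hgz3 : g z = x ∨ g z = y ∨ g z = z := by
    have := hmap z hz; rw [hN] at this; simpa using this
  have hnontriv : ¬ (g x = x ∧ g y = y ∧ g z = z) := by
    rintro ⟨h1, h2, h3⟩
    obtain ⟨⟨w, hw⟩, hu⟩ := hmove
    simp only at hu
    rw [hN] at hw
    simp only [Set.mem_insert_iff, Set.mem_singleton_iff] at hw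
    rename' hw => hm
    rcases hm with h | h | h <;> rw [h] at hu <;> [exact hu h1; exact hu h2; exact hu h3]
  rcases hgx3 with h1 | h1 | h1
  · -- g x = x
    rcases hgy3 with h2 | h2 | h2
    · -- g y = x = g x
      exact absurd (g.injective (h2.trans h1.symm)).symm hxy
    · -- g y = y : then g z = z, contradiction with nontriviality
      have h3 : g z = z := by
        rcases hgz3 with h3 | h3 | h3
        · exact absurd (g.injective (h3.trans h1.symm)).symm hxz
        · exact absurd (g.injective (h3.trans h2.symm)).symm hyz
        · exact h3
      exact absurd ⟨h1, h2, h3⟩ hnontriv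
    · -- g x = x, g y = z : transposition fixing x
      exact ⟨x, y, z, hN, hxy, hxz, hyz,
        fun h hhG hhv => fixed_all hx hy hg hgv h1 (by rw [h2]; exact fun h => hyz h.symm) hloc h hhG hhv,
        ⟨g, hg, hgv, h2⟩⟩
  · -- g x = y
    rcases hgy3 with h2 | h2 | h2
    · -- g y = x : then g z = z : transposition fixing z
      have h3 : g z = z := by
        rcases hgz3 with h3 | h3 | h3
        · exact absurd (g.injective (h3.trans h2.symm)).symm hyz
        · exact absurd (g.injective (h3.trans h1.symm)).symm hxz
        · exact h3
      have hN' : Γ.neighborSet v = {z, x, y} := by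
        rw [hN]; ext w
        simp only [Set.mem_insert_iff, Set.mem_singleton_iff]; tauto
      exact ⟨z, x, y, hN', fun h => hxz h.symm, fun h => hyz h.symm, hxy,
        fun h hhG hhv => fixed_all hz hx hg hgv h3 (by rw [h1]; exact fun h => hxy h.symm)
          hloc h hhG hhv,
        ⟨g, hg, hgv, h1⟩⟩
    · -- g y = y = g x
      exact absurd (g.injective (h1.trans h2.symm)) hxy
    · -- g x = y, g y = z : 3-cycle
      exact absurd (three_cycle_false hxy hxz hyz hx hg hgv h1 h2 hloc) not_false
  · -- g x = z
    rcases hgy3 with h2 | h2 | h2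
    · -- g y = x : then g z = y : 3-cycle x → z → y → x
      have h3 : g z = y := by
        rcases hgz3 with h3 | h3 | h3
        · exact absurd (g.injective (h3.trans h2.symm)).symm hyz
        · exact h3
        · exact absurd (g.injective (h1.trans h3.symm)) hxz
      exact absurd (three_cycle_false hxz (fun h => hxy h) (fun h => hyz h.symm) hx
        hg hgv h1 h3 hloc) not_false
    · -- g y = y : transposition fixing y
      have hN' : Γ.neighborSet v = {y, x, z} := by
        rw [hN]; ext w
        simp only [Set.mem_insert_iff, Set.mem_singleton_iff]; tauto
      exact ⟨y, x, z, hN', fun h => hxy h.symm, hyz, hxz,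
        fun h hhG hhv => fixed_all hy hx hg hgv h2 (by rw [h1]; exact fun h => hxz h.symm)
          hloc h hhG hhv,
        ⟨g, hg, hgv, h1⟩⟩
    · -- g y = z = g x
      exact absurd (g.injective (h1.trans h2.symm)) hxy
def SameStab (G : Subgroup (Equiv.Perm V)) (u u' : V) : Prop :=
  ∀ g ∈ G, (g u = u ↔ g u' = u')

lemma sameStab_symm {u u' : V} (h : SameStab G u u') : SameStab G u' u :=
  fun g hg => (h g hg).symm

lemma stab_conj_image {h : Equiv.Perm V} (hh : h ∈ G) (u : V) :
    (fun g => h * g * h⁻¹) '' {g : Equiv.Perm V | g ∈ G ∧ g u = u}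
      = {g : Equiv.Perm V | g ∈ G ∧ g (h u) = h u} := by
  ext g
  constructor
  · rintro ⟨x, ⟨hxG, hxu⟩, rfl⟩
    refine ⟨G.mul_mem (G.mul_mem hh hxG) (G.inv_mem hh), ?_⟩
    simp [Equiv.Perm.mul_apply, hxu]
  · rintro ⟨hgG, hgu⟩
    refine ⟨h⁻¹ * g * h, ⟨G.mul_mem (G.mul_mem (G.inv_mem hh) hgG) hh, ?_⟩, by group⟩
    simp only [Equiv.Perm.mul_apply, hgu, Equiv.Perm.inv_apply_self]

lemma stab_ncard_eq (hTrans : ∀ u w : V, ∃ g ∈ G, g u = w) (u w : V) :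
    {g : Equiv.Perm V | g ∈ G ∧ g u = u}.ncard
      = {g : Equiv.Perm V | g ∈ G ∧ g w = w}.ncard := by
  obtain ⟨h, hh, rfl⟩ := hTrans u w
  rw [← stab_conj_image hh u]
  rw [Set.ncard_image_of_injective]
  intro a b hab
  simpa using mul_left_cancel (mul_right_cancel hab)

lemma sameStab_of_le (hTrans : ∀ u w : V, ∃ g ∈ G, g u = w) {u u' : V}
    (hsub : ∀ g ∈ G, g u = u → g u' = u') : SameStab G u u' := by
  have hset : {g : Equiv.Perm V | g ∈ G ∧ g u = u}
      = {g : Equiv.Perm V | g ∈ G ∧ g u' = u'} := by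
    apply Set.eq_of_subset_of_ncard_le
    · rintro g ⟨hgG, hgu⟩; exact ⟨hgG, hsub g hgG hgu⟩
    · exact le_of_eq (stab_ncard_eq hTrans u' u)
    · exact Set.toFinite _
  intro g hg
  constructor
  · exact hsub g hg
  · intro hgu'
    have : g ∈ {g : Equiv.Perm V | g ∈ G ∧ g u = u} := hset ▸ ⟨hg, hgu'⟩
    exact this.2

lemma sameStab_conj {u w : V} (hss : SameStab G u w) {g : Equiv.Perm V} (hg : g ∈ G) :
    SameStab G (g u) (g w) := by
  intro k hk
  have key : ∀ x : V, (k (g x) = g x ↔ (g⁻¹ * k * g) x = x) := by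
    intro x
    simp only [Equiv.Perm.mul_apply]
    constructor
    · intro h; rw [h, Equiv.Perm.inv_apply_self]
    · intro h
      have := congrArg g h
      rwa [Equiv.Perm.apply_inv_self] at this
  rw [key u, key w]
  exact hss _ (G.mul_mem (G.mul_mem (G.inv_mem hg) hk) hg)


lemma struct_all {v : V} (hcubic : ∀ w : V, (Γ.neighborSet w).ncard = 3)
    (hAut : ∀ g ∈ G, ∀ u w : V, Γ.Adj (g u) (g w) ↔ Γ.Adj u w)
    (hTrans : ∀ u w : V, ∃ g ∈ G, g u = w)
    (hloc : (inducedNbhd Γ G v).ncard = 2) (u : V) :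
    ∃ u' a b : V, Struct Γ G u u' a b := by
  obtain ⟨v', a, b, hN, h1, h2, h3, hfix, g₀, hg₀, hg₀v, hg₀ab⟩ :=
    struct_v (hcubic v) hAut hloc
  obtain ⟨h, hh, hhv⟩ := hTrans v u
  have hinv : h⁻¹ u = v := by rw [← hhv, Equiv.Perm.inv_apply_self]
  refine ⟨h v', h a, h b, ?_, fun e => h1 (h.injective e), fun e => h2 (h.injective e),
    fun e => h3 (h.injective e), ?_, ?_⟩
  · ext w
    have key : Γ.Adj u w ↔ h⁻¹ w ∈ Γ.neighborSet v := by
      rw [SimpleGraph.mem_neighborSet, ← hhv]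
      conv_lhs => rw [← Equiv.Perm.apply_inv_self h w]
      exact hAut h hh v (h⁻¹ w)
    show Γ.Adj u w ↔ _
    rw [key, hN]
    simp only [Set.mem_insert_iff, Set.mem_singleton_iff]
    constructor
    · rintro (e | e | e)
      · left; rw [← e, Equiv.Perm.apply_inv_self]
      · right; left; rw [← e, Equiv.Perm.apply_inv_self]
      · right; right; rw [← e, Equiv.Perm.apply_inv_self]
    · rintro (rfl | rfl | rfl)
      · left; rw [Equiv.Perm.inv_apply_self]
      · right; left; rw [Equiv.Perm.inv_apply_self]
      · right; right; rw [Equiv.Perm.inv_apply_self]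
  · intro g hgG hgu
    have hmem : h⁻¹ * g * h ∈ G := G.mul_mem (G.mul_mem (G.inv_mem hh) hgG) hh
    have hfixv : (h⁻¹ * g * h) v = v := by
      simp only [Equiv.Perm.mul_apply, hhv, hgu, hinv]
    have hres : h⁻¹ (g (h v')) = v' := by
      simpa [Equiv.Perm.mul_apply] using hfix _ hmem hfixv
    have := congrArg h hres
    rwa [Equiv.Perm.apply_inv_self] at this
  · refine ⟨h * g₀ * h⁻¹, G.mul_mem (G.mul_mem hh hg₀) (G.inv_mem hh), ?_, ?_⟩
    · simp only [Equiv.Perm.mul_apply, hinv, hg₀v, hhv]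
    · simp only [Equiv.Perm.mul_apply, Equiv.Perm.inv_apply_self, hg₀ab]

lemma struct_swap (hAut : ∀ g ∈ G, ∀ u w : V, Γ.Adj (g u) (g w) ↔ Γ.Adj u w)
    {u u' a b : V} (hst : Struct Γ G u u' a b) :
    ∃ g ∈ G, g u = u ∧ g u' = u' ∧ g a = b ∧ g b = a := by
  obtain ⟨hN, h1, h2, h3, hfix, g, hg, hgu, hgab⟩ := hst
  have hgu' : g u' = u' := hfix g hg hgu
  have hb : b ∈ Γ.neighborSet u := by rw [hN]; simp
  have hgb : g b ∈ Γ.neighborSet u := by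
    have : Γ.Adj (g u) (g b) := (hAut g hg u b).mpr hb
    rwa [hgu] at this
  rw [hN] at hgb
  simp only [Set.mem_insert_iff, Set.mem_singleton_iff] at hgb
  rcases hgb with e | e | e
  · exact absurd (g.injective (hgu'.trans e.symm)) h2
  · exact ⟨g, hg, hgu, hgu', hgab, e⟩
  · exact absurd (g.injective (hgab.trans e.symm)) h3

lemma exists_unique_mate (hcubic : ∀ w : V, (Γ.neighborSet w).ncard = 3)
    (hAut : ∀ g ∈ G, ∀ u w : V, Γ.Adj (g u) (g w) ↔ Γ.Adj u w)
    (hTrans : ∀ u w : V, ∃ g ∈ G, g u = w)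
    {v : V} (hloc : (inducedNbhd Γ G v).ncard = 2) (u : V) :
    ∃! u' : V, Γ.Adj u u' ∧ SameStab G u u' := by
  obtain ⟨u', a, b, hst⟩ := struct_all hcubic hAut hTrans hloc u
  obtain ⟨g, hg, hgu, hgu', hgab, hgba⟩ := struct_swap hAut hst
  obtain ⟨hN, h1, h2, h3, hfix, -⟩ := hst
  refine ⟨u', ⟨?_, sameStab_of_le hTrans hfix⟩, ?_⟩
  · have : u' ∈ Γ.neighborSet u := by rw [hN]; simp
    exact this
  · rintro w ⟨hadj, hss⟩
    have hw : w ∈ Γ.neighborSet u := hadj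
    rw [hN] at hw
    simp only [Set.mem_insert_iff, Set.mem_singleton_iff] at hw
    rcases hw with rfl | rfl | rfl
    · rfl
    · exact absurd (((hss g hg).mp hgu).symm.trans hgab) h3
    · exact absurd (((hss g hg).mp hgu).symm.trans hgba) fun e => h3 e.symm



theorem stmt7 {V : Type} [Fintype V] (Γ : SimpleGraph V)
    (hconn : Γ.Connected)
    (hcubic : ∀ w : V, (Γ.neighborSet w).ncard = 3)
    (G : Subgroup (Equiv.Perm V))
    (hAut : ∀ g ∈ G, ∀ u w : V, Γ.Adj (g u) (g w) ↔ Γ.Adj u w)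
    (hTrans : ∀ u w : V, ∃ g ∈ G, g u = w)
    (v : V)
    (hloc : Nat.card ↥(inducedNbhd Γ G v) = 2) :
    -- (i) unique neighbour with equal stabiliser
    (∀ u : V, ∃! u' : V, Γ.Adj u u' ∧
        ∀ g ∈ G, ((g : Equiv.Perm V) u = u ↔ (g : Equiv.Perm V) u' = u')) ∧
    -- (ii) T is a perfect matching and a single G-orbit; G has exactly two edge-orbits
    (matchingEdges Γ G ⊆ Γ.edgeSet ∧
      (∀ w : V, ∃! e, e ∈ matchingEdges Γ G ∧ w ∈ e) ∧
      (matchingEdges Γ G).Nonempty ∧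
      (∀ g ∈ G, ∀ e ∈ matchingEdges Γ G,
        Sym2.map (g : Equiv.Perm V) e ∈ matchingEdges Γ G) ∧
      (∀ e₁ ∈ matchingEdges Γ G, ∀ e₂ ∈ matchingEdges Γ G,
        ∃ g ∈ G, Sym2.map (g : Equiv.Perm V) e₁ = e₂) ∧
      (Γ.edgeSet \ matchingEdges Γ G).Nonempty ∧
      (∀ e₁ ∈ Γ.edgeSet \ matchingEdges Γ G, ∀ e₂ ∈ Γ.edgeSet \ matchingEdges Γ G,
        ∃ g ∈ G, Sym2.map (g : Equiv.Perm V) e₁ = e₂)) ∧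
    -- (iii) Γ − T is a disjoint union of cycles, all of the same length
    ((∀ w : V, ((Γ.deleteEdges (matchingEdges Γ G)).neighborSet w).ncard = 2) ∧
      ∃ k : ℕ, ∀ w : V,
        (((Γ.deleteEdges (matchingEdges Γ G)).connectedComponentMk w).supp).ncard = k) := by
  have hloc' : (inducedNbhd Γ G v).ncard = 2 := by
    rw [← Nat.card_coe_set_eq]; exact hloc
  have hEU := exists_unique_mate hcubic hAut hTrans hloc'
  choose m hm using hEU
  have hmadj : ∀ u, Γ.Adj u (m u) := fun u => (hm u).1.1
  have hmss : ∀ u, SameStab G u (m u) := fun u => (hm u).1.2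
  have hmuq : ∀ u y, Γ.Adj u y ∧ SameStab G u y → y = m u := fun u => (hm u).2
  have hminv : ∀ g ∈ G, ∀ u, g (m u) = m (g u) := fun g hg u =>
    hmuq (g u) (g (m u)) ⟨(hAut g hg u (m u)).mpr (hmadj u), sameStab_conj (hmss u) hg⟩
  have hmm : ∀ u, m (m u) = u := fun u =>
    (hmuq (m u) u ⟨(hmadj u).symm, sameStab_symm (hmss u)⟩).symm
  have hTiff : ∀ e, e ∈ matchingEdges Γ G ↔ ∃ u, e = s(u, m u) := by
    intro e
    constructor
    · rintro ⟨u, u', rfl, hadj, hss⟩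
      exact ⟨u, by rw [hmuq u u' ⟨hadj, hss⟩]⟩
    · rintro ⟨u, rfl⟩
      exact ⟨u, m u, rfl, hmadj u, hmss u⟩
  -- structural data at v
  obtain ⟨v', a, b, hstv⟩ := struct_all hcubic hAut hTrans hloc' v
  obtain ⟨g₀, hg₀, hg₀v, hg₀v', hg₀ab, hg₀ba⟩ := struct_swap hAut hstv
  obtain ⟨hNv, hv1, hv2, hv3, hvfix, -⟩ := hstv
  have hmv : m v = v' := by
    have hadj : v' ∈ Γ.neighborSet v := by rw [hNv]; simp
    exact (hmuq v v' ⟨hadj, sameStab_of_le hTrans hvfix⟩).symm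
  refine ⟨fun u => ⟨m u, (hm u).1, (hm u).2⟩, ⟨?_, ?_, ?_, ?_, ?_, ?_, ?_⟩, ?_, ?_⟩
  · -- T ⊆ edgeSet
    intro e he
    rw [hTiff] at he
    obtain ⟨u, rfl⟩ := he
    exact Γ.mem_edgeSet.mpr (hmadj u)
  · -- perfect matching
    intro w
    refine ⟨s(w, m w), ⟨(hTiff _).mpr ⟨w, rfl⟩, Sym2.mem_mk_left w (m w)⟩, ?_⟩
    rintro e ⟨heT, hwe⟩
    rw [hTiff] at heT
    obtain ⟨u, rfl⟩ := heT
    rcases Sym2.mem_iff.mp hwe with rfl | rfl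
    · rfl
    · rw [hmm]; exact Sym2.eq_swap
  · exact ⟨s(v, m v), (hTiff _).mpr ⟨v, rfl⟩⟩
  · -- invariance under G
    intro g hg e he
    rw [hTiff] at he ⊢
    obtain ⟨u, rfl⟩ := he
    exact ⟨g u, by rw [Sym2.map_pair_eq, hminv g hg u]⟩
  · -- transitivity on T
    intro e₁ h₁ e₂ h₂
    rw [hTiff] at h₁ h₂
    obtain ⟨u, rfl⟩ := h₁
    obtain ⟨w, rfl⟩ := h₂
    obtain ⟨g, hg, hgu⟩ := hTrans u w
    exact ⟨g, hg, by rw [Sym2.map_pair_eq, hminv g hg u, hgu]⟩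
  · -- a non-matching edge exists
    refine ⟨s(v, a), ?_, ?_⟩
    · have : a ∈ Γ.neighborSet v := by rw [hNv]; simp
      exact Γ.mem_edgeSet.mpr this
    · intro hT
      rw [hTiff] at hT
      obtain ⟨u, hu⟩ := hT
      rcases Sym2.eq_iff.mp hu with ⟨rfl, rfl⟩ | ⟨hvm, rfl⟩
      · exact hv1 hmv.symm
      · have : a = m v := by rw [hvm, hmm]
        exact hv1 (this.trans hmv).symm
  · -- transitivity on non-matching edges
    have claim : ∀ e ∈ Γ.edgeSet \ matchingEdges Γ G,
        ∃ g ∈ G, Sym2.map (g : Equiv.Perm V) e = s(v, a) := by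
      intro e he
      induction e using Sym2.ind with
      | _ p q =>
      obtain ⟨hpe, hpt⟩ := he
      have hadj : Γ.Adj p q := Γ.mem_edgeSet.mp hpe
      have hqm : q ≠ m p := by rintro rfl; exact hpt ((hTiff _).mpr ⟨p, rfl⟩)
      obtain ⟨h, hh, hhp⟩ := hTrans p v
      have hq : h q ∈ Γ.neighborSet v := by
        have : Γ.Adj (h p) (h q) := (hAut h hh p q).mpr hadj
        rwa [hhp] at this
      rw [hNv] at hq
      simp only [Set.mem_insert_iff, Set.mem_singleton_iff] at hq
      rcases hq with e | e | e
      · exfalso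
        apply hqm
        apply h.injective
        rw [e, ← hmv, ← hhp, ← hminv h hh p]
      · exact ⟨h, hh, by rw [Sym2.map_pair_eq, hhp, e]⟩
      · refine ⟨g₀ * h, G.mul_mem hg₀ hh, ?_⟩
        rw [Sym2.map_pair_eq]
        have e1 : (g₀ * h) p = v := by
          simp only [Equiv.Perm.mul_apply, hhp, hg₀v]
        have e2 : (g₀ * h) q = a := by
          simp only [Equiv.Perm.mul_apply, e, hg₀ba]
        rw [e1, e2]
    intro e₁ he₁ e₂ he₂
    obtain ⟨g₁, hg₁, hm₁⟩ := claim e₁ he₁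
    obtain ⟨g₂, hg₂, hm₂⟩ := claim e₂ he₂
    refine ⟨g₂⁻¹ * g₁, G.mul_mem (G.inv_mem hg₂) hg₁, ?_⟩
    rw [show ((g₂⁻¹ * g₁ : Equiv.Perm V) : V → V) = ⇑g₂⁻¹ ∘ ⇑g₁ from rfl,
      ← Sym2.map_map, hm₁, ← hm₂, Sym2.map_map]
    have : (⇑g₂⁻¹ ∘ ⇑g₂) = id := funext fun x => Equiv.Perm.inv_apply_self g₂ x
    rw [this, Sym2.map_id, id_eq]
  · -- degrees in the deleted graph
    intro w
    obtain ⟨w', aw, bw, hstw⟩ := struct_all hcubic hAut hTrans hloc' w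
    obtain ⟨hNw, hw1, hw2, hw3, hwfix, -⟩ := hstw
    have hmw : m w = w' := by
      have hadj : w' ∈ Γ.neighborSet w := by rw [hNw]; simp
      exact (hmuq w w' ⟨hadj, sameStab_of_le hTrans hwfix⟩).symm
    have hNd : (Γ.deleteEdges (matchingEdges Γ G)).neighborSet w = {aw, bw} := by
      ext x
      simp only [SimpleGraph.mem_neighborSet, SimpleGraph.deleteEdges_adj]
      constructor
      · rintro ⟨hadj, hnT⟩
        have hx : x ∈ Γ.neighborSet w := hadj
        rw [hNw] at hx
        simp only [Set.mem_insert_iff, Set.mem_singleton_iff] at hx ⊢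
        rcases hx with rfl | rfl | rfl
        · exact absurd ((hTiff _).mpr ⟨w, by rw [hmw]⟩) hnT
        · left; rfl
        · right; rfl
      · intro hx
        have hx' : x ∈ Γ.neighborSet w := by
          rw [hNw]
          rcases hx with rfl | rfl <;> simp
        refine ⟨hx', ?_⟩
        intro hT
        rw [hTiff] at hT
        obtain ⟨u, hu⟩ := hT
        have hxw' : x = w' := by
          rcases Sym2.eq_iff.mp hu with ⟨rfl, rfl⟩ | ⟨hwm, rfl⟩
          · exact hmw
          · rw [← hmw, hwm, hmm]
        rcases hx with rfl | rfl
        · exact hw1 hxw'.symm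
        · exact hw2 hxw'.symm
    rw [hNd, Set.ncard_pair hw3]
  · -- all components have the same size
    have hTpres : ∀ g ∈ G, ∀ x y : V, s(x, y) ∈ matchingEdges Γ G →
        s(g x, g y) ∈ matchingEdges Γ G := by
      intro g hg x y hxy
      rw [hTiff] at hxy ⊢
      obtain ⟨u, hu⟩ := hxy
      rcases Sym2.eq_iff.mp hu with ⟨rfl, rfl⟩ | ⟨rfl, rfl⟩
      · exact ⟨g x, by rw [hminv g hg]⟩
      · exact ⟨g y, by rw [hminv g hg, Sym2.eq_swap]⟩
    have hAut' : ∀ g ∈ G, ∀ x y : V,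
        (Γ.deleteEdges (matchingEdges Γ G)).Adj (g x) (g y) ↔
          (Γ.deleteEdges (matchingEdges Γ G)).Adj x y := by
      intro g hg x y
      simp only [SimpleGraph.deleteEdges_adj]
      constructor
      · rintro ⟨ha, hn⟩
        exact ⟨(hAut g hg x y).mp ha, fun hT => hn (hTpres g hg x y hT)⟩
      · rintro ⟨ha, hn⟩
        refine ⟨(hAut g hg x y).mpr ha, fun hT => hn ?_⟩
        have := hTpres g⁻¹ (G.inv_mem hg) (g x) (g y) hT
        simpa using this
    have hreach : ∀ g ∈ G, ∀ x y : V,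
        (Γ.deleteEdges (matchingEdges Γ G)).Reachable x y →
        (Γ.deleteEdges (matchingEdges Γ G)).Reachable (g x) (g y) := by
      intro g hg x y hxy
      exact hxy.map ⟨(g : V → V), fun {p q} hpq => (hAut' g hg p q).mpr hpq⟩
    refine ⟨(((Γ.deleteEdges (matchingEdges Γ G)).connectedComponentMk v).supp).ncard, ?_⟩
    intro w
    obtain ⟨g, hg, hgv⟩ := hTrans v w
    have hsupp : ((Γ.deleteEdges (matchingEdges Γ G)).connectedComponentMk w).supp
        = g '' ((Γ.deleteEdges (matchingEdges Γ G)).connectedComponentMk v).supp := by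
      ext x
      simp only [SimpleGraph.ConnectedComponent.mem_supp_iff, Set.mem_image]
      constructor
      · intro hx
        refine ⟨g⁻¹ x, ?_, by simp⟩
        rw [SimpleGraph.ConnectedComponent.eq]
        have hr := (SimpleGraph.ConnectedComponent.eq).mp hx
        have := hreach g⁻¹ (G.inv_mem hg) x w hr
        rwa [← hgv, Equiv.Perm.inv_apply_self] at this
      · rintro ⟨p, hp, rfl⟩
        rw [SimpleGraph.ConnectedComponent.eq] at hp ⊢
        have := hreach g hg p v hp
        rwa [hgv] at this
    rw [hsupp, Set.ncard_image_of_injective _ g.injective]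

end Stmt7
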